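/- Let H > 0, P ≠ 0 and C₇ ≠ 0 be real numbers, and let η ∈ (0,∞). Suppose the real numbers L₂, u₂ and x satisfy: (i) (L₂/H)² = H² − 1 − (H²/(P sinh²η))·(1 − P); (ii) u₂ = L₂ + H²·cosh η/sinh η; (iii) (1/H²)·(u₂ − 2H²·cosh η/sinh η)·(1/H²)·u₂·sinh²η + C₇·(−x + 1) = 0. Then x = 1 − sinh²η/(C₇H²) − 1/(C₇P). -/

import Mathlib

open Real Set

/-- Derivation of Formula (4.17) from equation (4.16). -/
theorem stmt_3
    (H P C₇ : ℝ) (hH : 0 < H) (hP : P ≠ 0) (hC₇ : C₇ ≠ 0)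
    (η : ℝ) (hη : η ∈ Ioi (0:ℝ))
    (L₂ u₂ x : ℝ)
    (h1 : (L₂ / H) ^ 2
        = H ^ 2 - 1 - (H ^ 2 / (P * (Real.sinh η) ^ 2)) * (1 - P))
    (h2 : u₂ = L₂ + H ^ 2 * Real.cosh η / Real.sinh η)
    (h3 : (1 / H ^ 2) * (u₂ - 2 * H ^ 2 * Real.cosh η / Real.sinh η)
        * ((1 / H ^ 2) * u₂ * (Real.sinh η) ^ 2) + C₇ * (-x + 1) = 0) :
    x = 1 - (Real.sinh η) ^ 2 / (C₇ * H ^ 2) - 1 / (C₇ * P) := by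
  have hs : Real.sinh η ≠ 0 := by rw [Real.sinh_ne_zero]; exact ne_of_gt (mem_Ioi.1 hη)
  have hc : Real.cosh η ^ 2 = Real.sinh η ^ 2 + 1 := by
    have := Real.cosh_sq η; linarith
  have hHne : H ≠ 0 := ne_of_gt hH
  subst h2
  field_simp at h1 h3 ⊢
  apply mul_right_cancel₀ (mul_ne_zero (pow_ne_zero 2 hHne) (pow_ne_zero 2 hs))
  linear_combination (-P*(Real.sinh η)^2) * h3 + ((Real.sinh η)^2) * h1
    + (-P*H^4*(Real.sinh η)^2) * hc
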